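/- Let ρ > 0, δ > 0, η = ρ/δ, and t = ρ/((ρ+δ)δ). Then δ²t/(1 + δt) = ρ/(1 + 2η). Consequently, if f is standard self-concordant and strictly convex with d = -H∇f(x), ρ = -∇f(x)ᵀd, δ = ‖d‖ₓ, then ∇f(x+td)ᵀd - ∇f(x)ᵀd ≥ ρ/(1+2η), so the Wolfe condition ∇f(x+td)ᵀd ≥ c₂∇f(x)ᵀd holds whenever 1/(1+2η) ≥ 1 - c₂. -/

import Mathlib

open Real
open scoped RealInnerProductSpace

section aux
variable {E : Type*} [NormedAddCommGroup E] [NormedSpace ℝ E]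

lemma line_hasDerivAt' {f : E → ℝ} (hf : ContDiff ℝ 3 f) {k : ℕ} (hk : (1 + k : ℕ) ≤ 3)
    (x d : E) (m : Fin k → E) (s : ℝ) :
    HasDerivAt (fun s : ℝ => iteratedFDeriv ℝ k f (x + s • d) m)
      (iteratedFDeriv ℝ (k+1) f (x + s • d) (Fin.cons d m)) s := by
  have hC : ContDiff ℝ 1 (iteratedFDeriv ℝ k f) :=
    hf.iteratedFDeriv_right (by exact_mod_cast hk)
  have hline : HasDerivAt (fun s : ℝ => x + s • d) d s := by
    simpa using ((hasDerivAt_id s).smul_const d).const_add x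
  have h1 : HasFDerivAt (iteratedFDeriv ℝ k f)
      (fderiv ℝ (iteratedFDeriv ℝ k f) (x + s • d)) (x + s • d) :=
    (hC.differentiable one_ne_zero (x + s • d)).hasFDerivAt
  have h2 := ((ContinuousMultilinearMap.apply ℝ (fun _ : Fin k => E) ℝ m).hasFDerivAt.comp
      (x + s • d) h1).comp_hasDerivAt s hline
  exact h2

lemma sc_core (f : E → ℝ) (hf : ContDiff ℝ 3 f)
    (hsc : ∀ (y h : E), |iteratedFDeriv ℝ 3 f y ![h, h, h]| ≤
        2 * (iteratedFDeriv ℝ 2 f y ![h, h]) ^ ((3 : ℝ) / 2))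
    (hconv : ∀ (y h : E), h ≠ 0 → 0 < iteratedFDeriv ℝ 2 f y ![h, h])
    (x d : E) (hd0 : d ≠ 0) {δ t : ℝ}
    (hδ : δ = Real.sqrt (iteratedFDeriv ℝ 2 f x ![d, d])) (ht : 0 ≤ t) :
    δ ^ 2 * t / (1 + δ * t) ≤ fderiv ℝ f (x + t • d) d - fderiv ℝ f x d := by
  set h2 : ℝ → ℝ := fun s => iteratedFDeriv ℝ 2 f (x + s • d) ![d, d] with hh2
  set h3 : ℝ → ℝ := fun s => iteratedFDeriv ℝ 3 f (x + s • d) ![d, d, d] with hh3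
  set g : ℝ → ℝ := fun s => fderiv ℝ f (x + s • d) d with hg
  have h2pos : ∀ s, 0 < h2 s := fun s => hconv _ d hd0
  have hx0 : x + (0:ℝ) • d = x := by simp
  have hδ2 : δ ^ 2 = h2 0 := by
    rw [hδ, Real.sq_sqrt (by rw [← hx0] at *; exact (h2pos 0).le)]
    simp [hh2, hx0]
  have hδpos : 0 < δ := by
    rw [hδ, Real.sqrt_pos, ← hx0]; exact h2pos 0
  -- derivatives
  have h2deriv : ∀ s, HasDerivAt h2 (h3 s) s := fun s =>
    line_hasDerivAt' hf (by norm_num) x d ![d, d] s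
  have gderiv : ∀ s, HasDerivAt g (h2 s) s := by
    intro s
    have := line_hasDerivAt' hf (by norm_num) x d ![d] s
    simpa [iteratedFDeriv_one_apply, hg] using this
  -- psi
  set ψ : ℝ → ℝ := fun s => h2 s ^ (-(1/2) : ℝ) with hψ
  have hψpos : ∀ s, 0 < ψ s := fun s => Real.rpow_pos_of_pos (h2pos s) _
  have hψderiv : ∀ s, HasDerivAt ψ (h3 s * (-(1/2)) * h2 s ^ ((-(1/2)) - 1 : ℝ)) s :=
    fun s => (h2deriv s).rpow_const (Or.inl (h2pos s).ne')
  have hψd_le : ∀ s, h3 s * (-(1/2)) * h2 s ^ ((-(1/2)) - 1 : ℝ) ≤ 1 := by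
    intro s
    have h1 : |h3 s| ≤ 2 * h2 s ^ ((3:ℝ)/2) := hsc _ d
    have hrp : (0:ℝ) < h2 s ^ ((-(1/2)) - 1 : ℝ) := Real.rpow_pos_of_pos (h2pos s) _
    have : h3 s * (-(1/2)) * h2 s ^ ((-(1/2)) - 1 : ℝ)
        ≤ |h3 s| * (1/2) * h2 s ^ ((-(1/2)) - 1 : ℝ) := by
      rw [mul_le_mul_iff_of_pos_right hrp]
      calc h3 s * (-(1/2)) ≤ |h3 s * (-(1/2))| := le_abs_self _
        _ = |h3 s| * (1/2) := by rw [abs_mul]; norm_num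
    refine this.trans ?_
    calc |h3 s| * (1/2) * h2 s ^ ((-(1/2)) - 1 : ℝ)
        ≤ 2 * h2 s ^ ((3:ℝ)/2) * (1/2) * h2 s ^ ((-(1/2)) - 1 : ℝ) := by
          gcongr
      _ = h2 s ^ ((3:ℝ)/2) * h2 s ^ ((-(1/2)) - 1 : ℝ) := by ring
      _ = h2 s ^ ((3:ℝ)/2 + ((-(1/2)) - 1)) := (Real.rpow_add (h2pos s) _ _).symm
      _ = 1 := by norm_num
  -- ψ s ≤ ψ 0 + s for s ≥ 0
  have hψle : ∀ s, 0 ≤ s → ψ s ≤ ψ 0 + s := by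
    intro s hs
    have hA : AntitoneOn (fun s => ψ s - s) (Set.univ : Set ℝ) := by
      refine antitoneOn_of_deriv_nonpos convex_univ
        (Continuous.continuousOn (continuous_iff_continuousAt.2 fun s =>
            ((hψderiv s).sub (hasDerivAt_id s)).continuousAt))
        (fun u _ => (((hψderiv u).sub (hasDerivAt_id u)).differentiableAt).differentiableWithinAt)
        ?_
      intro u _
      have hD : HasDerivAt (fun s : ℝ => ψ s - s)
          (h3 u * -(1/2) * h2 u ^ (-(1/2) - 1 : ℝ) - 1) u := by
        exact ((hψderiv u).sub (hasDerivAt_id' u)).congr_deriv (by ring)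
      rw [hD.deriv]
      have := hψd_le u
      linarith
    have := hA (Set.mem_univ 0) (Set.mem_univ s) hs
    simp only at this
    linarith
  -- lower bound on h2
  have h2lb : ∀ s, 0 ≤ s → δ ^ 2 / (1 + δ * s) ^ 2 ≤ h2 s := by
    intro s hs
    have hψ0 : ψ 0 = δ⁻¹ := by
      rw [hψ]
      simp only
      rw [show (-(1/2) : ℝ) = -(1/2) from rfl, Real.rpow_neg (h2pos 0).le,
        show ((1:ℝ)/2) = 1/2 from rfl, ← Real.sqrt_eq_rpow, hδ]
      congr 1
      rw [← hx0]
    have h1δ : 0 < 1 + δ * s := by positivity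
    have hle : ψ s ≤ (1 + δ * s) / δ := by
      have h1 := hψle s hs
      rw [hψ0] at h1
      have h2' : δ⁻¹ + s = (1 + δ * s) / δ := by field_simp
      linarith
    have hsq : (ψ s) ^ 2 ≤ ((1 + δ * s) / δ) ^ 2 := by
      gcongr
      exact (hψpos s).le
    have hinv : h2 s = ((ψ s) ^ 2)⁻¹ := by
      rw [hψ]
      simp only
      rw [← Real.rpow_natCast (h2 s ^ (-(1/2) : ℝ)) 2, ← Real.rpow_mul (h2pos s).le]
      norm_num
      rw [Real.rpow_neg_one, inv_inv]
    rw [hinv]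
    have h1 : (0:ℝ) < (ψ s) ^ 2 := pow_pos (hψpos s) 2
    calc δ ^ 2 / (1 + δ * s) ^ 2 = (((1 + δ * s) / δ) ^ 2)⁻¹ := by
          rw [div_pow, inv_div]
      _ ≤ ((ψ s) ^ 2)⁻¹ := by
          apply inv_anti₀ h1 hsq
  -- comparison function
  have key : g 0 + δ ^ 2 * t / (1 + δ * t) ≤ g t := by
    set F : ℝ → ℝ := fun s => g s - δ ^ 2 * s / (1 + δ * s) with hF
    have hpos' : ∀ s ∈ Set.Icc (0:ℝ) t, 0 < 1 + δ * s := by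
      intro s hs
      have := hs.1
      positivity
    have hFderiv : ∀ s ∈ Set.Icc (0:ℝ) t,
        HasDerivAt F (h2 s - δ ^ 2 / (1 + δ * s) ^ 2) s := by
      intro s hs
      have hden := hpos' s hs
      have ha : HasDerivAt (fun s : ℝ => δ ^ 2 * s) (δ ^ 2) s := by
        simpa using (hasDerivAt_id s).const_mul (δ ^ 2)
      have hb : HasDerivAt (fun s : ℝ => 1 + δ * s) δ s := by
        simpa using ((hasDerivAt_id s).const_mul δ).const_add 1
      have hq : HasDerivAt (fun s => δ ^ 2 * s / (1 + δ * s))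
          ((δ ^ 2 * (1 + δ * s) - δ ^ 2 * s * δ) / (1 + δ * s) ^ 2) s :=
        ha.div hb hden.ne'
      have hq' : (δ ^ 2 * (1 + δ * s) - δ ^ 2 * s * δ) / (1 + δ * s) ^ 2
          = δ ^ 2 / (1 + δ * s) ^ 2 := by ring_nf
      rw [hq'] at hq
      exact (gderiv s).sub hq
    have hmono : MonotoneOn F (Set.Icc 0 t) := by
      refine monotoneOn_of_deriv_nonneg (convex_Icc 0 t)
        (fun s hs => ?_) (fun s hs => ?_) (fun s hs => ?_)
      · exact (hFderiv s hs).continuousAt.continuousWithinAt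
      · rw [interior_Icc] at hs
        exact ((hFderiv s (Set.mem_Icc_of_Ioo hs)).differentiableAt).differentiableWithinAt
      · rw [interior_Icc] at hs
        rw [(hFderiv s (Set.mem_Icc_of_Ioo hs)).deriv]
        have := h2lb s hs.1.le
        linarith
    have h0m : (0:ℝ) ∈ Set.Icc (0:ℝ) t := Set.left_mem_Icc.2 ht
    have htm : t ∈ Set.Icc (0:ℝ) t := Set.right_mem_Icc.2 ht
    have := hmono h0m htm ht
    simp only [hF] at this
    simp only [mul_zero, zero_div] at this
    linarith
  have hg0 : g 0 = fderiv ℝ f x d := by rw [hg]; simp only [hx0]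
  have hgt : g t = fderiv ℝ f (x + t • d) d := rfl
  rw [← hg0, ← hgt]
  linarith

end aux

section innerg
variable {n : ℕ}

lemma inner_gradient' (f : EuclideanSpace ℝ (Fin n) → ℝ) (y v : EuclideanSpace ℝ (Fin n)) :
    ⟪gradient f y, v⟫ = fderiv ℝ f y v := by
  rw [gradient]
  exact InnerProductSpace.toDual_symm_apply

end innerg


theorem wolfe_condition_adaptive {n : ℕ}
    (f : EuclideanSpace ℝ (Fin n) → ℝ) (hf : ContDiff ℝ 3 f)
    (hsc : ∀ (x h : EuclideanSpace ℝ (Fin n)),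
      |iteratedFDeriv ℝ 3 f x ![h, h, h]| ≤
        2 * (iteratedFDeriv ℝ 2 f x ![h, h]) ^ ((3 : ℝ) / 2))
    (hconv : ∀ (x h : EuclideanSpace ℝ (Fin n)), h ≠ 0 →
      0 < iteratedFDeriv ℝ 2 f x ![h, h])
    (x : EuclideanSpace ℝ (Fin n))
    (H : EuclideanSpace ℝ (Fin n) →L[ℝ] EuclideanSpace ℝ (Fin n))
    (hHsym : ∀ u v : EuclideanSpace ℝ (Fin n), ⟪H u, v⟫ = ⟪u, H v⟫)
    (hHpos : ∀ v : EuclideanSpace ℝ (Fin n), v ≠ 0 → 0 < ⟪H v, v⟫)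
    (d : EuclideanSpace ℝ (Fin n)) (hd : d = -(H (gradient f x))) (hd0 : d ≠ 0)
    (ρ δ η t : ℝ)
    (hρ : ρ = -⟪gradient f x, d⟫)
    (hδ : δ = Real.sqrt (iteratedFDeriv ℝ 2 f x ![d, d]))
    (hη : η = ρ / δ) (ht : t = ρ / ((ρ + δ) * δ)) :
    δ ^ 2 * t / (1 + δ * t) = ρ / (1 + 2 * η) ∧
    ⟪gradient f (x + t • d), d⟫ - ⟪gradient f x, d⟫ ≥ ρ / (1 + 2 * η) ∧
    ∀ c₂ : ℝ, 0 < c₂ → c₂ < 1 → 1 / (1 + 2 * η) ≥ 1 - c₂ →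
      ⟪gradient f (x + t • d), d⟫ ≥ c₂ * ⟪gradient f x, d⟫ := by
  have hg0 : gradient f x ≠ 0 := by
    intro h0
    apply hd0
    rw [hd, h0, map_zero, neg_zero]
  have hρpos : 0 < ρ := by
    have : ⟪gradient f x, d⟫ = -⟪H (gradient f x), gradient f x⟫ := by
      rw [hd, inner_neg_right, real_inner_comm]
    rw [hρ, this, neg_neg]
    exact hHpos _ hg0
  have hδpos : 0 < δ := by
    rw [hδ, Real.sqrt_pos]
    exact hconv x d hd0
  have hηpos : 0 < η := by rw [hη]; positivity
  have htpos : 0 < t := by rw [ht]; positivity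
  have hδt : 0 < 1 + δ * t := by positivity
  have h2η : 0 < 1 + 2 * η := by positivity
  have heq : δ ^ 2 * t / (1 + δ * t) = ρ / (1 + 2 * η) := by
    rw [div_eq_div_iff hδt.ne' h2η.ne', ht, hη]
    have h1 : ρ + δ ≠ 0 := by positivity
    field_simp
    ring
  refine ⟨heq, ?_, ?_⟩
  · have hcore := sc_core f hf hsc hconv x d hd0 hδ htpos.le
    rw [← heq, inner_gradient', inner_gradient']
    exact hcore
  · intro c₂ hc₂0 hc₂1 hc
    have h2 : ⟪gradient f (x + t • d), d⟫ - ⟪gradient f x, d⟫ ≥ ρ / (1 + 2 * η) := by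
      have hcore := sc_core f hf hsc hconv x d hd0 hδ htpos.le
      rw [← heq, inner_gradient', inner_gradient']
      exact hcore
    have h3 : ρ / (1 + 2 * η) = ρ * (1 / (1 + 2 * η)) := by ring
    have h4 : ρ * (1 / (1 + 2 * η)) ≥ ρ * (1 - c₂) :=
      mul_le_mul_of_nonneg_left hc hρpos.le
    have h5 : ⟪gradient f x, d⟫ = -ρ := by rw [hρ]; ring
    rw [h5] at h2 ⊢
    nlinarith
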